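/- arXiv:math/0109201 — 4 statements merged into one kernel-verified Lean document; each statement's English description precedes it below -/
import Mathlib

section
/- For every n ∈ ℕ and all real numbers a, b, c, y one has (y + c²)·S_n(y; a, b, c+1) = (n+a+c)(n+b+c)·S_n(y; a, b, c) − S_{n+1}(y; a, b, c). (In the orthonormal normalization this is the contiguous relation ((c²+y)/√((a+c)(b+c))) Ŝ_n(y; a, b, c+1) = √((n+1)(a+b+n)) Ŝ_{n+1}(y; a, b, c) + √((a+c+n)(b+c+n)) Ŝ_n(y; a, b, c).) -/
open Finset

/-- Pochhammer symbol `(q)_m = q(q+1)⋯(q+m−1)` for a real `q`. -/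
noncomputable def poch (q : ℝ) (m : ℕ) : ℝ := ∏ l ∈ Finset.range m, (q + l)

/-- The continuous dual Hahn polynomial
`S_n(y; a, b, c) = ∑_{j=0}^n (−1)^j (n choose j) (a+b+j)_{n−j} (a+c+j)_{n−j}
  ∏_{l=0}^{j−1} ((a+l)² + y)`. -/
noncomputable def cdHahn (n : ℕ) (y a b c : ℝ) : ℝ :=
  ∑ j ∈ Finset.range (n + 1),
    (-1 : ℝ) ^ j * (n.choose j : ℝ) * poch (a + b + j) (n - j) * poch (a + c + j) (n - j) *
      ∏ l ∈ Finset.range j, ((a + l) ^ 2 + y)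

lemma poch_left (q : ℝ) (m : ℕ) : poch q (m+1) = q * poch (q+1) m := by
  simp only [poch, Finset.prod_range_succ']
  rw [mul_comm]
  congr 1
  · norm_num
  · apply Finset.prod_congr rfl; intro l _; push_cast; ring

lemma poch_right (q : ℝ) (m : ℕ) : poch q (m+1) = poch q m * (q + m) := by
  simp [poch, Finset.prod_range_succ]

/-- Contiguous relation for the continuous dual Hahn polynomials:
`(y + c²)·S_n(y; a, b, c+1) = (n+a+c)(n+b+c)·S_n(y; a, b, c) − S_{n+1}(y; a, b, c)`. -/
theorem cdHahn_contiguous_up (n : ℕ) (a b c y : ℝ) :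
    (y + c ^ 2) * cdHahn n y a b (c + 1) =
      ((n : ℝ) + a + c) * ((n : ℝ) + b + c) * cdHahn n y a b c - cdHahn (n + 1) y a b c := by
  set P : ℕ → ℝ := fun j => ∏ l ∈ Finset.range j, ((a + l) ^ 2 + y) with hP
  set A : ℝ := ((n : ℝ) + a + c) * ((n : ℝ) + b + c) with hA
  set T' : ℕ → ℝ := fun j =>
    (-1 : ℝ) ^ j * (n.choose j : ℝ) * poch (a + b + j) (n - j) * poch (a + (c+1) + j) (n - j) * P j with hT'
  set T : ℕ → ℝ := fun j =>
    (-1 : ℝ) ^ j * (n.choose j : ℝ) * poch (a + b + j) (n - j) * poch (a + c + j) (n - j) * P j with hT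
  set t : ℕ → ℝ := fun j =>
    (-1 : ℝ) ^ j * ((n+1).choose j : ℝ) * poch (a + b + j) (n + 1 - j) * poch (a + c + j) (n + 1 - j) * P j with ht
  set v : ℕ → ℝ := fun j => match j with
    | 0 => 0
    | Nat.succ k => (-1 : ℝ) ^ k * (n.choose k : ℝ) * poch (a + b + k) (n - k) * poch (a + c + 1 + k) (n - k) * P (k+1)
    with hv
  have key : ∀ j ∈ Finset.range (n+1), (y + c^2) * T' j + t j - A * T j = v (j+1) - v j := by
    intro j hj
    rw [Finset.mem_range] at hj
    simp only [hT', hT, ht, hv, hP, hA]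
    match j, hj with
    | 0, hj =>
      have hZ0 : poch (a+c) n * (a+c+n) = (a+c) * poch (a+c+1) n := by
        rw [← poch_right, poch_left]
      have pb : poch (a+b) (n+1) = poch (a+b) n * (a+b+n) := poch_right _ _
      have pc : poch (a+c) (n+1) = (a+c) * poch (a+c+1) n := poch_left _ _
      simp only [Nat.cast_zero, add_zero, Nat.sub_zero, Nat.choose_zero_right, Nat.cast_one,
        pow_zero, one_mul, zero_add, Finset.prod_range_zero, mul_one, Finset.prod_range_one,
        Nat.add_sub_cancel, pb, pc]
      rw [show a + (c+1) = a + c + 1 from by ring]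
      linear_combination (-((n:ℝ)+b+c) * poch (a+b) n) * hZ0
    | (k+1), hj =>
      clear_value P A T' T t v
      obtain ⟨m, rfl⟩ : ∃ m, n = k + 1 + m := ⟨n - (k+1), by omega⟩
      have d1 : k+1+m - (k+1) = m := by omega
      have d2 : k+1+m - k = m+1 := by omega
      have d3 : k+1+m+1 - (k+1) = m+1 := by omega
      have hCn : ((k+1+m).choose (k+1)) * (k+1) = ((k+1+m).choose k) * (m+1) := by
        have h := Nat.choose_succ_right_eq (k+1+m) k
        rwa [show k+1+m-k = m+1 from by omega] at h
      have hC : (((k+1+m).choose (k+1) : ℝ)) * ((k:ℝ)+1) = (((k+1+m).choose k : ℝ)) * ((m:ℝ)+1) := by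
        exact_mod_cast hCn
      have hZ : poch (a+c+((k:ℝ)+1)) m * (a+c+((k:ℝ)+1)+m) = (a+c+((k:ℝ)+1)) * poch (a+c+((k:ℝ)+1)+1) m := by
        rw [← poch_right, poch_left]
      simp only [d1, d2, d3, Nat.choose_succ_succ (k+1+m) k]
      push_cast
      rw [Finset.prod_range_succ (fun l : ℕ => (a + (l:ℝ))^2 + y) (k+1)]
      rw [poch_right (a+b+((k:ℝ)+1)) m, poch_left (a+c+((k:ℝ)+1)) m,
        poch_left (a+b+(k:ℝ)) m, poch_left (a+c+1+(k:ℝ)) m]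
      simp only [Nat.succ_eq_add_one]
      push_cast
      linear_combination (norm := ring_nf)
        (-(-1:ℝ)^(k+1) * (((k:ℝ)+1+(m:ℝ))+b+c) * (((k+1+m).choose (k+1) : ℝ)) *
          poch (a+b+((k:ℝ)+1)) m * (∏ l ∈ Finset.range (k+1), ((a + (l:ℝ))^2 + y))) * hZ +
        (-(-1:ℝ)^(k+1) * (a+c+(k:ℝ)+1) * poch (a+b+((k:ℝ)+1)) m * poch (a+c+((k:ℝ)+1)+1) m *
          (∏ l ∈ Finset.range (k+1), ((a + (l:ℝ))^2 + y))) * hC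
  have expand : cdHahn (n+1) y a b c = (∑ j ∈ Finset.range (n+1), t j) + t (n+1) := by
    rw [cdHahn, Finset.sum_range_succ]
  have e1 : cdHahn n y a b (c+1) = ∑ j ∈ Finset.range (n+1), T' j := by rw [cdHahn]
  have e2 : cdHahn n y a b c = ∑ j ∈ Finset.range (n+1), T j := by rw [cdHahn]
  have sum_eq : ∑ j ∈ Finset.range (n+1), ((y + c^2) * T' j + t j - A * T j) = v (n+1) - v 0 := by
    exact (Finset.sum_congr rfl key).trans (Finset.sum_range_sub v (n+1))
  have expand2 : ∑ j ∈ Finset.range (n+1), ((y + c^2) * T' j + t j - A * T j)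
      = (y + c^2) * (∑ j ∈ Finset.range (n+1), T' j) + (∑ j ∈ Finset.range (n+1), t j)
        - A * (∑ j ∈ Finset.range (n+1), T j) := by
    rw [Finset.sum_sub_distrib, Finset.sum_add_distrib, Finset.mul_sum, Finset.mul_sum]
  have hv0 : v 0 = 0 := rfl
  have last : v (n+1) + t (n+1) = 0 := by
    simp only [hv, ht, Nat.sub_self, Nat.add_sub_cancel, Nat.choose_self]
    simp only [poch, Finset.range_zero, Finset.prod_empty, pow_succ]
    ring
  rw [eq_sub_iff_add_eq, expand, e1, e2]
  have := sum_eq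
  rw [expand2] at this
  linarith [this]
end

section
/- For every integer n ≥ 1 and all real numbers a, b, c, y one has S_n(y; a, b, c−1) = S_n(y; a, b, c) − n(n+a+b−1)·S_{n−1}(y; a, b, c). (In the orthonormal normalization this is the companion contiguous relation √((a+c−1)(b+c−1)) Ŝ_n(y; a, b, c−1) = √((n+a+c−1)(n+b+c−1)) Ŝ_n(y; a, b, c) + √(n(n+a+b−1)) Ŝ_{n−1}(y; a, b, c).) -/
open Finset

lemma poch_succ (q : ℝ) (m : ℕ) : poch q (m + 1) = poch q m * (q + m) := by
  simp [poch, Finset.prod_range_succ]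

lemma poch_succ' (q : ℝ) (m : ℕ) : poch q (m + 1) = q * poch (q + 1) m := by
  unfold poch
  rw [Finset.prod_range_succ']
  push_cast
  rw [add_zero, mul_comm]
  congr 1
  apply Finset.prod_congr rfl
  intro l _
  ring

/-- The companion contiguous relation:
`S_n(y; a, b, c−1) = S_n(y; a, b, c) − n(n+a+b−1)·S_{n−1}(y; a, b, c)` for `n ≥ 1`. -/
theorem cdHahn_contiguous_down (n : ℕ) (hn : 1 ≤ n) (a b c y : ℝ) :
    cdHahn n y a b (c - 1) =
      cdHahn n y a b c - (n : ℝ) * ((n : ℝ) + a + b - 1) * cdHahn (n - 1) y a b c := by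
  obtain ⟨m, rfl⟩ : ∃ m, n = m + 1 := ⟨n - 1, by omega⟩
  simp only [Nat.add_sub_cancel]
  unfold cdHahn
  have hext : ∑ j ∈ Finset.range (m + 1),
      (-1 : ℝ) ^ j * (m.choose j : ℝ) * poch (a + b + j) (m - j) * poch (a + c + j) (m - j) *
        ∏ l ∈ Finset.range j, ((a + l) ^ 2 + y)
      = ∑ j ∈ Finset.range (m + 1 + 1),
      (-1 : ℝ) ^ j * (m.choose j : ℝ) * poch (a + b + j) (m - j) * poch (a + c + j) (m - j) *
        ∏ l ∈ Finset.range j, ((a + l) ^ 2 + y) := by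
    conv_rhs => rw [Finset.sum_range_succ]
    simp [Nat.choose_succ_self]
  rw [hext, Finset.mul_sum, ← Finset.sum_sub_distrib]
  apply Finset.sum_congr rfl
  intro j hj
  rcases eq_or_lt_of_le (Nat.lt_succ_iff.mp (Finset.mem_range.mp hj)) with h | h
  · subst h
    simp [Nat.sub_self, Nat.choose_succ_self, poch]
  · have hjm : j ≤ m := Nat.lt_succ_iff.mp h
    obtain ⟨k, rfl⟩ : ∃ k, m = j + k := ⟨m - j, by omega⟩
    have h1 : j + k + 1 - j = k + 1 := by omega
    have h2 : j + k - j = k := by omega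
    rw [h1, h2, poch_succ (a + b + (j : ℝ)) k,
      poch_succ' (a + (c - 1) + (j : ℝ)) k, poch_succ (a + c + (j : ℝ)) k]
    have h3 : a + (c - 1) + (j : ℝ) + 1 = a + c + j := by ring
    rw [h3]
    have hnat : (j + k + 1).choose j * (k + 1) = (j + k).choose j * (j + k + 1) := by
      have h := Nat.choose_mul_succ_eq (j + k) j
      rw [h1] at h
      omega
    have hC : (((j + k + 1).choose j : ℕ) : ℝ) * (k + 1)
        = (((j + k).choose j : ℕ) : ℝ) * ((j : ℝ) + k + 1) := by exact_mod_cast hnat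
    push_cast
    linear_combination (-((-1 : ℝ) ^ j * poch (a + b + (j : ℝ)) k * poch (a + c + (j : ℝ)) k *
      (∏ l ∈ Finset.range j, ((a + l) ^ 2 + y)) * (a + b + (j : ℝ) + k))) * hC
end

section
/- For all n, p ∈ ℕ with p ≤ n and all real numbers a, b, y one has S_n(y; a, b, 1−a−p) = (−1)^p · [∏_{j=0}^{p−1} ((a+j)² + y)] · S_{n−p}(y; a+p, b, 1−a). (With a = k₁−k₂+1/2 and b = k₁+k₂−1/2 this is the parameter-shift identity used in the proof of the bilinear generating function for Meixner polynomials, relating S_n(y; k₁−k₂+1/2, k₁+k₂−1/2, k₂−k₁−p+1/2) to S_{n−p}(y; k₁−k₂+p+1/2, k₁+k₂−1/2, k₂−k₁+1/2).) -/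
open Finset

lemma poch_succ_nat (m k : ℕ) :
    poch ((m : ℝ) + 1) k * (m.factorial : ℝ) = ((m + k).factorial : ℝ) := by
  induction k with
  | zero => simp [poch]
  | succ k ih =>
    rw [show poch ((m : ℝ) + 1) (k + 1) = poch ((m : ℝ) + 1) k * (((m : ℝ) + 1) + k) from
      Finset.prod_range_succ _ _]
    have : m + (k + 1) = (m + k) + 1 := by omega
    rw [this, Nat.factorial_succ]
    push_cast
    linear_combination ((m : ℝ) + 1 + k) * ih

lemma choose_poch_key (n p i : ℕ) (hpn : p ≤ n) (hi : i ≤ n - p) :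
    (n.choose (p + i) : ℝ) * poch ((i : ℝ) + 1) (n - p - i) =
      ((n - p).choose i : ℝ) * poch (((p + i : ℕ) : ℝ) + 1) (n - p - i) := by
  have natident : n.choose (p + i) * (n - p).factorial * (p + i).factorial =
      (n - p).choose i * n.factorial * i.factorial := by
    have h1 := Nat.choose_mul_factorial_mul_factorial (show p + i ≤ n by omega)
    have h2 := Nat.choose_mul_factorial_mul_factorial (show i ≤ n - p from hi)
    have e : n - (p + i) = n - p - i := by omega
    rw [e] at h1
    rw [← h1, ← h2]
    ring
  have hk1 := poch_succ_nat i (n - p - i)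
  have hk2 := poch_succ_nat (p + i) (n - p - i)
  have e1 : i + (n - p - i) = n - p := by omega
  have e2 : p + i + (n - p - i) = n := by omega
  rw [e1] at hk1
  rw [e2] at hk2
  have hne : ((i.factorial * (p + i).factorial : ℕ) : ℝ) ≠ 0 := by
    exact_mod_cast Nat.mul_ne_zero i.factorial_ne_zero (p + i).factorial_ne_zero
  apply mul_right_cancel₀ hne
  have nc : (n.choose (p + i) : ℝ) * ((n - p).factorial : ℝ) * ((p + i).factorial : ℝ) =
      ((n - p).choose i : ℝ) * (n.factorial : ℝ) * (i.factorial : ℝ) := by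
    exact_mod_cast natident
  push_cast at hk2 ⊢
  linear_combination ((n.choose (p + i) : ℝ) * ((p + i).factorial : ℝ)) * hk1 -
    (((n - p).choose i : ℝ) * (i.factorial : ℝ)) * hk2 + nc

/-- Parameter-shift identity for continuous dual Hahn polynomials: for `p ≤ n`,
`S_n(y; a, b, 1−a−p) = (−1)^p · ∏_{j=0}^{p−1} ((a+j)² + y) · S_{n−p}(y; a+p, b, 1−a)`. -/
theorem cdHahn_shift (n p : ℕ) (hpn : p ≤ n) (a b y : ℝ) :
    cdHahn n y a b (1 - a - p) =
      (-1 : ℝ) ^ p * (∏ j ∈ Finset.range p, ((a + j) ^ 2 + y)) *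
        cdHahn (n - p) y (a + p) b (1 - a) := by
  unfold cdHahn
  have hsub : Finset.Ico p (n + 1) ⊆ Finset.range (n + 1) := by
    intro x hx
    simp only [Finset.mem_Ico] at hx
    simp only [Finset.mem_range]
    omega
  rw [← Finset.sum_subset hsub (by
    intro j hj hj'
    simp only [Finset.mem_range] at hj
    simp only [Finset.mem_Ico] at hj'
    have hjp : j < p := by omega
    have hz : poch (a + (1 - a - ↑p) + ↑j) (n - j) = 0 := by
      apply Finset.prod_eq_zero (i := p - 1 - j)
      · simp only [Finset.mem_range]; omega
      · have : ((p - 1 - j : ℕ) : ℝ) = (p : ℝ) - 1 - j := by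
          push_cast [Nat.cast_sub (show j ≤ p - 1 by omega), Nat.cast_sub (show 1 ≤ p by omega)]
          ring
        rw [this]; ring
    rw [hz]
    ring)]
  rw [Finset.sum_Ico_eq_sum_range]
  have hnp : n + 1 - p = (n - p) + 1 := by omega
  rw [hnp, Finset.mul_sum]
  apply Finset.sum_congr rfl
  intro i hi
  simp only [Finset.mem_range] at hi
  have hi' : i ≤ n - p := by omega
  have e1 : n - (p + i) = n - p - i := by omega
  have e2 : a + b + ((p + i : ℕ) : ℝ) = (a + ↑p) + b + ↑i := by push_cast; ring
  have e3 : a + (1 - a - ↑p) + ((p + i : ℕ) : ℝ) = (i : ℝ) + 1 := by push_cast; ring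
  have e4 : (a + ↑p) + (1 - a) + (i : ℝ) = ((p + i : ℕ) : ℝ) + 1 := by push_cast; ring
  have eprod : (∏ l ∈ Finset.range (p + i), ((a + ↑l) ^ 2 + y)) =
      (∏ l ∈ Finset.range p, ((a + ↑l) ^ 2 + y)) *
        ∏ l ∈ Finset.range i, (((a + ↑p) + ↑l) ^ 2 + y) := by
    rw [Finset.prod_range_add]
    congr 1
    apply Finset.prod_congr rfl
    intro l _
    push_cast; ring
  rw [e1, e2, e3, e4, eprod, pow_add]
  have key := choose_poch_key n p i hpn hi'
  linear_combination ((-1 : ℝ) ^ p * (-1) ^ i * poch ((a + ↑p) + b + ↑i) (n - p - i) *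
    (∏ l ∈ Finset.range p, ((a + ↑l) ^ 2 + y)) *
    (∏ l ∈ Finset.range i, (((a + ↑p) + ↑l) ^ 2 + y))) * key
end

section
/- Let a, b, t ∈ ℂ with 0 < |t| < 1 and let r ∈ ℤ; if r < 0 assume additionally that a+j ≠ 0 and b+j ≠ 0 for all integers j with r ≤ j ≤ −1. Then both series below converge absolutely and ∑_{k=0}^∞ (a)_k (b)_k t^k/(k! Γ(1−r+k)) = (a)_r (b)_r t^r ∑_{p=0}^∞ (a+r)_p (b+r)_p t^p/(p! Γ(1+r+p)), where for r ≥ 0 one sets (q)_r = q(q+1)⋯(q+r−1) and for r < 0 one sets (q)_r = 1/((q+r)(q+r+1)⋯(q−1)), and 1/Γ is interpreted as 0 at non-positive integers. Equivalently, in terms of the regularized Gauss hypergeometric series, ₂F₁(a, b; 1−r; t)/Γ(1−r) = (Γ(a+r)Γ(b+r)/(Γ(a)Γ(b))) · (t^r/Γ(1+r)) · ₂F₁(a+r, b+r; 1+r; t) for integer r. -/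
open Finset Complex Filter Function Topology

/-- Pochhammer symbol `(q)_k = q(q+1)⋯(q+k−1)` for `q ∈ ℂ` and `k ∈ ℕ`. -/
noncomputable def cpoch (q : ℂ) (k : ℕ) : ℂ := ∏ i ∈ Finset.range k, (q + i)

/-- Pochhammer symbol with integer index: for `r ≥ 0`, `(q)_r = q(q+1)⋯(q+r−1)`, and for
`r < 0`, `(q)_r = 1/((q+r)(q+r+1)⋯(q−1))`. -/
noncomputable def zpoch (q : ℂ) (r : ℤ) : ℂ :=
  if 0 ≤ r then ∏ i ∈ Finset.range r.toNat, (q + i)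
  else (∏ i ∈ Finset.range (-r).toNat, (q + r + i))⁻¹

lemma cpoch_add (q : ℂ) (m k : ℕ) : cpoch q (m + k) = cpoch q m * cpoch (q + m) k := by
  simp only [cpoch, Finset.prod_range_add]
  congr 1
  refine Finset.prod_congr rfl fun i _ => ?_
  push_cast; ring

lemma cpoch_succ (q : ℂ) (k : ℕ) : cpoch q (k + 1) = cpoch q k * (q + k) :=
  Finset.prod_range_succ _ _

lemma tendsto_inv_shift (d : ℂ) : Tendsto (fun k : ℕ => ((d + k)⁻¹ : ℂ)) atTop (𝓝 0) := by
  rw [tendsto_zero_iff_norm_tendsto_zero]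
  have h2 : Tendsto (fun k : ℕ => ‖(d + k : ℂ)‖) atTop atTop := by
    refine tendsto_atTop_mono (fun k => ?_)
      (tendsto_atTop_add_const_right _ (-‖d‖) tendsto_natCast_atTop_atTop)
    have h3 := norm_sub_norm_le ((k : ℂ)) (-d)
    rw [sub_neg_eq_add, norm_neg, Complex.norm_natCast, add_comm] at h3
    linarith
  simp only [norm_inv]
  exact h2.inv_tendsto_atTop

lemma tendsto_frac (c d : ℂ) : Tendsto (fun k : ℕ => (c + k) / (d + k)) atTop (𝓝 1) := by
  have h : Tendsto (fun k : ℕ => 1 + (c - d) * (d + k)⁻¹) atTop (𝓝 1) := by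
    simpa using ((tendsto_inv_shift d).const_mul (c - d)).const_add 1
  refine h.congr' ?_
  filter_upwards [eventually_ge_atTop (⌈‖d‖⌉₊ + 1)] with k hk
  have hdk : (d + (k : ℂ)) ≠ 0 := by
    intro h0
    have hd : d = -(k : ℂ) := by linear_combination h0
    have h1 : ‖d‖ = (k : ℝ) := by rw [hd]; simp
    have h2 : ‖d‖ ≤ (⌈‖d‖⌉₊ : ℝ) := Nat.le_ceil _
    have h3 : ((⌈‖d‖⌉₊ + 1 : ℕ) : ℝ) ≤ (k : ℝ) := by exact_mod_cast Nat.cast_le.mpr hk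
    push_cast at h3
    linarith
  field_simp
  ring

lemma summable_term (a b t : ℂ) (ht1 : ‖t‖ < 1) (m : ℂ) :
    Summable (fun k : ℕ => cpoch a k * cpoch b k * t ^ k /
      ((k.factorial : ℂ) * Complex.Gamma (m + k))) := by
  set f : ℕ → ℂ := fun k => cpoch a k * cpoch b k * t ^ k /
      ((k.factorial : ℂ) * Complex.Gamma (m + k)) with hf
  set k0 : ℕ := ⌈1 - m.re⌉₊ with hk0
  have hre : ∀ k : ℕ, k0 ≤ k → 0 < (m + (k : ℂ)).re := by
    intro k hk
    have h1 : 1 - m.re ≤ (k0 : ℝ) := Nat.le_ceil _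
    have h2 : (k0 : ℝ) ≤ (k : ℝ) := Nat.cast_le.mpr hk
    simp only [Complex.add_re, Complex.natCast_re]
    linarith
  have hden : ∀ k : ℕ, k0 ≤ k → ((k.factorial : ℂ) * Complex.Gamma (m + k)) ≠ 0 := by
    intro k hk
    exact mul_ne_zero (Nat.cast_ne_zero.mpr k.factorial_ne_zero)
      (Complex.Gamma_ne_zero_of_re_pos (hre k hk))
  have hmk : ∀ k : ℕ, k0 ≤ k → (m + (k : ℂ)) ≠ 0 := by
    intro k hk h0
    have := hre k hk
    rw [h0] at this
    simp at this
  have hrec : ∀ k : ℕ, k0 ≤ k →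
      f (k + 1) = f k * ((a + k) * (b + k) * t / (((k : ℂ) + 1) * (m + k))) := by
    intro k hk
    have hG : Complex.Gamma (m + ((k : ℕ) + 1 : ℕ)) = (m + k) * Complex.Gamma (m + k) := by
      push_cast
      rw [show m + ((k : ℂ) + 1) = (m + k) + 1 by ring, Complex.Gamma_add_one _ (hmk k hk)]
    simp only [hf, cpoch_succ, Nat.factorial_succ, hG]
    have h1 : ((k.factorial : ℂ)) ≠ 0 := Nat.cast_ne_zero.mpr k.factorial_ne_zero
    have h2 : ((k : ℂ) + 1) ≠ 0 := Nat.cast_add_one_ne_zero k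
    have h3 : Complex.Gamma (m + k) ≠ 0 := Complex.Gamma_ne_zero_of_re_pos (hre k hk)
    push_cast
    field_simp
    ring
  by_cases hz : ∃ K, k0 ≤ K ∧ f K = 0
  · obtain ⟨K, hK, hfK⟩ := hz
    refine summable_of_ne_finset_zero (s := Finset.range (K + 1)) fun k hk => ?_
    simp only [Finset.mem_range, not_lt] at hk
    have hnum : cpoch a K * cpoch b K * t ^ K = 0 := by
      by_contra hn
      exact hn (by
        have := hfK
        rw [hf] at this
        simpa [div_eq_zero_iff, hden K hK] using this)
    have hk' : K ≤ k := by omega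
    obtain ⟨j, rfl⟩ := Nat.exists_eq_add_of_le hk'
    have : cpoch a (K + j) * cpoch b (K + j) * t ^ (K + j) = 0 := by
      rw [cpoch_add, cpoch_add, pow_add]
      rcases mul_eq_zero.mp hnum with h | h
      · rcases mul_eq_zero.mp h with h | h
        · rw [h]; ring
        · rw [h]; ring
      · rw [h]; ring
    simp only [hf, this, zero_div]
  · push_neg at hz
    refine summable_of_ratio_test_tendsto_lt_one ht1 ?_ ?_
    · exact eventually_atTop.mpr ⟨k0, fun k hk => hz k hk⟩
    · have hw : Tendsto (fun k : ℕ => (a + k) * (b + k) * t / (((k : ℂ) + 1) * (m + k)))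
          atTop (𝓝 t) := by
        have h1 := ((tendsto_frac a 1).mul (tendsto_frac b m)).mul_const t
        simp only [one_mul] at h1
        refine (by simpa using h1 : Tendsto _ atTop (𝓝 t)).congr fun k => ?_
        rw [div_mul_div_comm, div_mul_eq_mul_div]
        ring_nf
      have hc : Tendsto (fun k : ℕ =>
          ‖(a + k) * (b + k) * t / (((k : ℂ) + 1) * (m + k))‖) atTop (𝓝 ‖t‖) := by
        exact hw.norm
      refine hc.congr' ?_
      filter_upwards [eventually_ge_atTop k0] with k hk
      rw [hrec k hk, norm_mul]
      exact (mul_div_cancel_left₀ _ (norm_ne_zero_iff.mpr (hz k hk))).symm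

/-- The index-shift identity for the regularized Gauss hypergeometric series: for
`a, b, t ∈ ℂ` with `0 < |t| < 1` and `r ∈ ℤ` (assuming for `r < 0` that `a+j ≠ 0 ≠ b+j`
for `r ≤ j ≤ −1`), both series converge absolutely and
`∑_{k=0}^∞ (a)_k (b)_k t^k/(k! Γ(1−r+k))
  = (a)_r (b)_r t^r ∑_{p=0}^∞ (a+r)_p (b+r)_p t^p/(p! Γ(1+r+p))`,
i.e. `₂F₁(a,b;1−r;t)/Γ(1−r) = (Γ(a+r)Γ(b+r)/(Γ(a)Γ(b)))·(t^r/Γ(1+r))·₂F₁(a+r,b+r;1+r;t)`,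
with `1/Γ` interpreted as `0` at non-positive integers. -/
theorem regularized_hypergeometric_shift (a b t : ℂ) (ht0 : 0 < ‖t‖)
    (ht1 : ‖t‖ < 1) (r : ℤ)
    (ha : ∀ j : ℤ, r ≤ j → j ≤ -1 → a + j ≠ 0)
    (hb : ∀ j : ℤ, r ≤ j → j ≤ -1 → b + j ≠ 0) :
    Summable (fun k : ℕ => ‖(cpoch a k * cpoch b k * t ^ k /
      ((k.factorial : ℂ) * Complex.Gamma (1 - r + k)))‖) ∧
    Summable (fun p : ℕ => ‖(cpoch (a + r) p * cpoch (b + r) p * t ^ p /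
      ((p.factorial : ℂ) * Complex.Gamma (1 + r + p)))‖) ∧
    ∑' k : ℕ, cpoch a k * cpoch b k * t ^ k /
        ((k.factorial : ℂ) * Complex.Gamma (1 - r + k)) =
      zpoch a r * zpoch b r * t ^ r *
        ∑' p : ℕ, cpoch (a + r) p * cpoch (b + r) p * t ^ p /
          ((p.factorial : ℂ) * Complex.Gamma (1 + r + p)) := by
  have ht : t ≠ 0 := by
    intro h; rw [h] at ht0; simp at ht0
  refine ⟨?_, ?_, ?_⟩
  · exact (summable_term a b t ht1 (1 - (r : ℂ))).norm
  · exact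
      (summable_term (a + r) (b + r) t ht1 (1 + (r : ℂ))).norm
  · rcases le_or_gt 0 r with hr | hr
    · -- case r ≥ 0
      lift r to ℕ using hr with n
      simp only [Int.cast_natCast, zpow_natCast]
      have hzp : ∀ q : ℂ, zpoch q (n : ℤ) = cpoch q n := by
        intro q
        simp [zpoch, cpoch]
      rw [hzp, hzp]
      have hinj : Function.Injective (fun p : ℕ => p + n) := add_left_injective n
      have hsupp : Function.support (fun k : ℕ => cpoch a k * cpoch b k * t ^ k /
          ((k.factorial : ℂ) * Complex.Gamma (1 - (n : ℂ) + k))) ⊆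
          Set.range (fun p : ℕ => p + n) := by
        intro k hk
        rcases le_or_gt n k with h | h
        · exact ⟨k - n, by simpa using Nat.sub_add_cancel h⟩
        · exfalso
          apply hk
          show cpoch a k * cpoch b k * t ^ k /
            ((k.factorial : ℂ) * Complex.Gamma (1 - (n : ℂ) + k)) = 0
          have hG : (1 : ℂ) - (n : ℂ) + (k : ℂ) = -((n - 1 - k : ℕ) : ℂ) := by
            rw [show (n - 1 - k : ℕ) = n - (k + 1) by omega, Nat.cast_sub (by omega)]
            push_cast
            ring
          rw [hG, Complex.Gamma_neg_nat_eq_zero, mul_zero, div_zero]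
      rw [← hinj.tsum_eq hsupp]
      have hterm : ∀ p : ℕ, cpoch a (p + n) * cpoch b (p + n) * t ^ (p + n) /
          (((p + n).factorial : ℂ) * Complex.Gamma (1 - (n : ℂ) + ((p + n : ℕ) : ℂ))) =
          cpoch a n * cpoch b n * t ^ n *
            (cpoch (a + n) p * cpoch (b + n) p * t ^ p /
              ((p.factorial : ℂ) * Complex.Gamma (1 + (n : ℂ) + p))) := by
        intro p
        have h1 : (1 : ℂ) - (n : ℂ) + ((p + n : ℕ) : ℂ) = (p : ℂ) + 1 := by push_cast; ring
        have h2 : (1 : ℂ) + (n : ℂ) + (p : ℂ) = ((n + p : ℕ) : ℂ) + 1 := by push_cast; ring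
        rw [h1, h2, Complex.Gamma_nat_eq_factorial, Complex.Gamma_nat_eq_factorial,
          show p + n = n + p by omega, cpoch_add, cpoch_add]
        rw [pow_add]
        ring
      calc ∑' p : ℕ, cpoch a (p + n) * cpoch b (p + n) * t ^ (p + n) /
            (((p + n).factorial : ℂ) * Complex.Gamma (1 - (n : ℂ) + ((p + n : ℕ) : ℂ)))
          = ∑' p : ℕ, cpoch a n * cpoch b n * t ^ n *
            (cpoch (a + n) p * cpoch (b + n) p * t ^ p /
              ((p.factorial : ℂ) * Complex.Gamma (1 + (n : ℂ) + p))) := tsum_congr hterm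
        _ = _ := tsum_mul_left
    · -- case r < 0
      obtain ⟨s, rfl⟩ : ∃ s : ℕ, r = -(s : ℤ) := ⟨(-r).toNat, by omega⟩
      have hs1 : 1 ≤ s := by omega
      simp only [Int.cast_neg, Int.cast_natCast]
      have hzp : ∀ q : ℂ, zpoch q (-(s : ℤ)) = (cpoch (q + -(s : ℂ)) s)⁻¹ := by
        intro q
        rw [zpoch, if_neg (by omega)]
        congr 1
        rw [show (-(-(s : ℤ))).toNat = s by omega, cpoch]
        refine Finset.prod_congr rfl fun i _ => ?_
        push_cast
        ring
      have hPa : cpoch (a + -(s : ℂ)) s ≠ 0 := by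
        rw [cpoch]
        refine Finset.prod_ne_zero_iff.mpr fun i hi => ?_
        have hi' : i < s := Finset.mem_range.mp hi
        have := ha ((i : ℤ) - s) (by omega) (by omega)
        intro h0
        apply this
        rw [← h0]
        push_cast
        ring
      have hPb : cpoch (b + -(s : ℂ)) s ≠ 0 := by
        rw [cpoch]
        refine Finset.prod_ne_zero_iff.mpr fun i hi => ?_
        have hi' : i < s := Finset.mem_range.mp hi
        have := hb ((i : ℤ) - s) (by omega) (by omega)
        intro h0
        apply this
        rw [← h0]
        push_cast
        ring
      rw [hzp, hzp, zpow_neg, zpow_natCast]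
      have hinj : Function.Injective (fun q : ℕ => q + s) := add_left_injective s
      have hsupp : Function.support (fun p : ℕ => cpoch (a + -(s : ℂ)) p *
          cpoch (b + -(s : ℂ)) p * t ^ p /
          ((p.factorial : ℂ) * Complex.Gamma (1 + -(s : ℂ) + p))) ⊆
          Set.range (fun q : ℕ => q + s) := by
        intro p hp
        rcases le_or_gt s p with h | h
        · exact ⟨p - s, by simpa using Nat.sub_add_cancel h⟩
        · exfalso
          apply hp
          show cpoch (a + -(s : ℂ)) p * cpoch (b + -(s : ℂ)) p * t ^ p /
            ((p.factorial : ℂ) * Complex.Gamma (1 + -(s : ℂ) + p)) = 0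
          have hG : (1 : ℂ) + -(s : ℂ) + (p : ℂ) = -((s - 1 - p : ℕ) : ℂ) := by
            rw [show (s - 1 - p : ℕ) = s - (p + 1) by omega, Nat.cast_sub (by omega)]
            push_cast
            ring
          rw [hG, Complex.Gamma_neg_nat_eq_zero, mul_zero, div_zero]
      rw [← hinj.tsum_eq hsupp, ← tsum_mul_left]
      refine tsum_congr fun q => ?_
      show cpoch a q * cpoch b q * t ^ q /
          ((q.factorial : ℂ) * Complex.Gamma (1 - -(s : ℂ) + q)) =
        (cpoch (a + -(s : ℂ)) s)⁻¹ * (cpoch (b + -(s : ℂ)) s)⁻¹ * (t ^ s)⁻¹ *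
          (cpoch (a + -(s : ℂ)) (q + s) * cpoch (b + -(s : ℂ)) (q + s) * t ^ (q + s) /
            (((q + s).factorial : ℂ) * Complex.Gamma (1 + -(s : ℂ) + ((q + s : ℕ) : ℂ))))
      have h1 : (1 : ℂ) - -(s : ℂ) + (q : ℂ) = (((q + s : ℕ)) : ℂ) + 1 := by push_cast; ring
      have h2 : (1 : ℂ) + -(s : ℂ) + ((q + s : ℕ) : ℂ) = (q : ℂ) + 1 := by push_cast; ring
      rw [h1, h2, Complex.Gamma_nat_eq_factorial, Complex.Gamma_nat_eq_factorial,
        show q + s = s + q by omega, cpoch_add, cpoch_add,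
        show a + -(s : ℂ) + (s : ℂ) = a by ring, show b + -(s : ℂ) + (s : ℂ) = b by ring,
        pow_add]
      have hq : ((q.factorial : ℂ)) ≠ 0 := Nat.cast_ne_zero.mpr q.factorial_ne_zero
      have hsq : (((s + q).factorial : ℂ)) ≠ 0 := Nat.cast_ne_zero.mpr (s + q).factorial_ne_zero
      have hts : t ^ s ≠ 0 := pow_ne_zero _ ht
      field_simp
end
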